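/- In a binary tree-child phylogenetic network with n leaves, the number h of hybrid nodes satisfies h ≤ n - 1. -/
import Mathlib


/-- In-degree of a node in a directed graph given by its arc relation. -/
noncomputable def indeg {V : Type} (A : V → V → Prop) (v : V) : ℕ := Nat.card {u : V // A u v}

/-- Out-degree of a node in a directed graph given by its arc relation. -/
noncomputable def outdeg {V : Type} (A : V → V → Prop) (v : V) : ℕ := Nat.card {u : V // A v u}

/-- A leaf: degrees (1,0). -/
def IsLeaf {V : Type} (A : V → V → Prop) (v : V) : Prop :=
  indeg A v = 1 ∧ outdeg A v = 0

/-- A tree node: degrees (1,0) (leaf), (0,2) (root) or (1,2) (internal tree node). -/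
def IsTreeNode {V : Type} (A : V → V → Prop) (v : V) : Prop :=
  (indeg A v = 1 ∧ outdeg A v = 0) ∨ (indeg A v = 0 ∧ outdeg A v = 2) ∨
    (indeg A v = 1 ∧ outdeg A v = 2)

/-- A hybrid node: degrees (2,1). -/
def IsHybrid {V : Type} (A : V → V → Prop) (v : V) : Prop :=
  indeg A v = 2 ∧ outdeg A v = 1

/-- A binary tree-child phylogenetic network on the (finite) node set `V`:
a DAG with a single root, all of whose nodes are tree nodes or hybrid nodes,
and where every non-leaf node has a child that is a tree node. -/
structure BTC (V : Type) [Finite V] where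
  Arc : V → V → Prop
  acyclic : ∀ v : V, ¬ Relation.TransGen Arc v v
  uniqueRoot : ∃! r : V, indeg Arc r = 0
  binary : ∀ v : V, IsTreeNode Arc v ∨ IsHybrid Arc v
  treeChild : ∀ v : V, 0 < outdeg Arc v → ∃ w : V, Arc v w ∧ IsTreeNode Arc w

/-- The "tree step" relation: an arc into a node of in-degree 1. -/
def TStep {V : Type} (A : V → V → Prop) (a b : V) : Prop := A a b ∧ indeg A b = 1

lemma tstep_backdet {V : Type} {A : V → V → Prop} {a a' b : V}
    (h : TStep A a b) (h' : TStep A a' b) : a = a' := by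
  obtain ⟨ha, hb⟩ := h
  obtain ⟨ha', _⟩ := h'
  have hs : Subsingleton {u : V // A u b} := (Nat.card_eq_one_iff_unique.mp hb).1
  have := hs.allEq ⟨a, ha⟩ ⟨a', ha'⟩
  exact congrArg Subtype.val this

lemma wfArc {V : Type} [Finite V] (N : BTC V) :
    WellFounded (fun a b => Relation.TransGen N.Arc b a) := by
  have h1 : IsTrans V (fun a b => Relation.TransGen N.Arc b a) :=
    ⟨fun a b c hab hbc => hbc.trans hab⟩
  have h2 : IsIrrefl V (fun a b => Relation.TransGen N.Arc b a) :=
    ⟨fun a ha => N.acyclic a ha⟩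
  exact Finite.wellFounded_of_trans_of_irrefl _

lemma outdeg_zero_leaf {V : Type} [Finite V] (N : BTC V) {v : V}
    (h : outdeg N.Arc v = 0) : IsLeaf N.Arc v := by
  rcases N.binary v with (⟨h1, h2⟩ | ⟨h1, h2⟩ | ⟨h1, h2⟩) | ⟨h1, h2⟩ <;>
    first
      | exact ⟨h1, h2⟩
      | (rw [h] at h2; omega)

lemma exists_leaf_path {V : Type} [Finite V] (N : BTC V) (v : V) :
    ∃ l : V, IsLeaf N.Arc l ∧ Relation.ReflTransGen (TStep N.Arc) v l := by
  induction v using (wfArc N).induction with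
  | _ v ih =>
    by_cases h0 : outdeg N.Arc v = 0
    · exact ⟨v, outdeg_zero_leaf N h0, Relation.ReflTransGen.refl⟩
    · obtain ⟨w, hvw, htw⟩ := N.treeChild v (Nat.pos_of_ne_zero h0)
      have hwin : 0 < indeg N.Arc w := by
        have : Nonempty {u : V // N.Arc u w} := ⟨⟨v, hvw⟩⟩
        exact Nat.card_pos
      have hw1 : indeg N.Arc w = 1 := by
        rcases htw with ⟨h1, _⟩ | ⟨h1, _⟩ | ⟨h1, _⟩ <;> omega
      obtain ⟨l, hl, hpath⟩ := ih w (Relation.TransGen.single hvw)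
      exact ⟨l, hl, Relation.ReflTransGen.head ⟨hvw, hw1⟩ hpath⟩

lemma paths_comparable {V : Type} {A : V → V → Prop} :
    ∀ {a b l : V}, Relation.ReflTransGen (TStep A) a l →
      Relation.ReflTransGen (TStep A) b l →
      Relation.ReflTransGen (TStep A) a b ∨ Relation.ReflTransGen (TStep A) b a := by
  intro a b l h1 h2
  induction h1 using Relation.ReflTransGen.head_induction_on with
  | refl => exact Or.inr h2
  | head hac hcl ih =>
    rename_i a' c
    rcases ih with hcb | hbc
    · exact Or.inl (Relation.ReflTransGen.head hac hcb)
    · rcases Relation.ReflTransGen.cases_tail hbc with rfl | ⟨d, hbd, hdc⟩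
      · exact Or.inl (Relation.ReflTransGen.single hac)
      · have : a' = d := tstep_backdet hac hdc
        exact Or.inr (this ▸ hbd)

lemma path_end {V : Type} {A : V → V → Prop} {a b : V}
    (h : Relation.ReflTransGen (TStep A) a b) (hb : indeg A b ≠ 1) : a = b := by
  rcases Relation.ReflTransGen.cases_tail h with rfl | ⟨d, _, hdb⟩
  · rfl
  · exact absurd hdb.2 hb

lemma source_eq {V : Type} {A : V → V → Prop} {a b l : V}
    (ha : indeg A a ≠ 1) (hb : indeg A b ≠ 1)
    (h1 : Relation.ReflTransGen (TStep A) a l)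
    (h2 : Relation.ReflTransGen (TStep A) b l) : a = b := by
  rcases paths_comparable h1 h2 with h | h
  · exact path_end h hb
  · exact (path_end h ha).symm

/-- In a binary tree-child phylogenetic network with n leaves, the number h of
hybrid nodes satisfies h ≤ n - 1. -/
theorem stmt1 {V : Type} [Finite V] (N : BTC V) (n h : ℕ)
    (hn : n = Nat.card {v : V // IsLeaf N.Arc v})
    (hh : h = Nat.card {v : V // IsHybrid N.Arc v}) :
    h ≤ n - 1 := by
  obtain ⟨r, hr, _⟩ := N.uniqueRoot
  have hA := exists_leaf_path N
  choose g hg1 hg2 using hA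
  -- source of an element of Option Hybrid
  let src : Option {v : V // IsHybrid N.Arc v} → V := fun o =>
    match o with
    | none => r
    | some v => v.1
  have hsrc : ∀ o, indeg N.Arc (src o) ≠ 1 := by
    rintro (_ | ⟨v, hv⟩)
    · simp only [src]; omega
    · simp only [src]; rw [hv.1]; omega
  let f : Option {v : V // IsHybrid N.Arc v} → {l : V // IsLeaf N.Arc l} :=
    fun o => ⟨g (src o), hg1 (src o)⟩
  have hf : Function.Injective f := by
    intro o1 o2 heq
    have hl : g (src o1) = g (src o2) := congrArg Subtype.val heq
    have hs : src o1 = src o2 :=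
      source_eq (hsrc o1) (hsrc o2) (hg2 (src o1)) (hl ▸ hg2 (src o2))
    match o1, o2 with
    | none, none => rfl
    | none, some ⟨v, hv⟩ =>
        exfalso; simp only [src] at hs; rw [hs, hv.1] at hr; omega
    | some ⟨v, hv⟩, none =>
        exfalso; simp only [src] at hs; rw [← hs, hv.1] at hr; omega
    | some ⟨v, hv⟩, some ⟨w, hw⟩ =>
        simp only [src] at hs; simp [hs]
  have hcard := Nat.card_le_card_of_injective f hf
  rw [Finite.card_option] at hcard
  omega
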